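/- A-stability of the N = 1 ADER-DG scheme: for every z ∈ ℂ with Re z ≤ 0, one has 1 − (2/3)z + (1/6)z² ≠ 0 and |1 + z/3| ≤ |1 − (2/3)z + (1/6)z²|; that is, the stability function R(z) = (1 + z/3)/(1 − (2/3)z + (1/6)z²) satisfies |R(z)| ≤ 1 on the closed left half-plane. -/

import Mathlib

/-- A-stability of the `N = 1` ADER-DG scheme: for every complex `z` with `Re z ≤ 0`,
the denominator `1 − (2/3)z + (1/6)z²` is nonzero and
`|1 + z/3| ≤ |1 − (2/3)z + (1/6)z²|`, i.e. the stability function satisfies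
`|R(z)| ≤ 1` on the closed left half-plane. -/
theorem aderDG_N1_Astable (z : ℂ) (hz : z.re ≤ 0) :
    1 - (2 / 3) * z + (1 / 6) * z ^ 2 ≠ 0 ∧
    ‖1 + z / 3‖ ≤ ‖1 - (2 / 3) * z + (1 / 6) * z ^ 2‖ := by
  set x := z.re with hx
  set y := z.im with hy
  constructor
  · intro h
    have hre := congrArg Complex.re h
    have him := congrArg Complex.im h
    simp [Complex.add_re, Complex.add_im, Complex.sub_re, Complex.sub_im,
      Complex.mul_re, Complex.mul_im, pow_two, ← hx, ← hy] at hre him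
    nlinarith [sq_nonneg y, sq_nonneg x, sq_nonneg (x - 2), sq_nonneg (y * (x - 2)),
      mul_nonneg (mul_self_nonneg y) (neg_nonneg.2 hz)]
  · have e1 : ‖6 + 2 * z‖ = 6 * ‖1 + z / 3‖ := by
      rw [show (6 : ℂ) + 2 * z = 6 * (1 + z / 3) by ring, norm_mul]
      norm_num
    have e2 : ‖6 - 4 * z + z ^ 2‖ =
        6 * ‖1 - (2 / 3) * z + (1 / 6) * z ^ 2‖ := by
      rw [show (6 : ℂ) - 4 * z + z ^ 2 = 6 * (1 - (2 / 3) * z + (1 / 6) * z ^ 2) by ring,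
        norm_mul]
      norm_num
    have key : Complex.normSq (6 + 2 * z) ≤ Complex.normSq (6 - 4 * z + z ^ 2) := by
      simp only [Complex.normSq_apply, Complex.add_re, Complex.add_im, Complex.sub_re,
        Complex.sub_im, Complex.mul_re, Complex.mul_im, pow_two,
        Complex.re_ofNat, Complex.im_ofNat, ← hx, ← hy]
      nlinarith [sq_nonneg (y ^ 2 + 2 * x * (x - 4) / 2), sq_nonneg y, sq_nonneg (y^2),
        mul_nonneg (sq_nonneg y) (mul_nonneg (neg_nonneg.2 hz) (by nlinarith : (0:ℝ) ≤ 4 - x)),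
        mul_nonneg (mul_nonneg (neg_nonneg.2 hz) (by nlinarith : (0:ℝ) ≤ 2 - x))
          (by nlinarith [sq_nonneg (x - 3)] : (0:ℝ) ≤ (x - 3)^2 + 3)]
    have := Real.sqrt_le_sqrt key
    rw [← Complex.norm_def, ← Complex.norm_def] at this
    rw [e1, e2] at this
    linarith
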